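/- (Lemma 3.5 part 1, truncation decreases the energy.) Let n ≥ 1 and let A be a symmetric positive definite real n × n matrix with A_{mj} ≤ 0 for all m ≠ j. Let b ∈ ℝⁿ, and for each m let g_m : ℝ → ℝ be continuous with c⁻_m ≤ g_m(s) ≤ c⁺_m for all s ∈ ℝ, for given constants c⁻_m ≤ c⁺_m. Let u⁻, u⁺ ∈ ℝⁿ satisfy u⁻ ⪯ u⁺ (componentwise), Au⁺ = c⁺ + b, and Au⁻ = c⁻ + b. Define the truncation T : ℝⁿ → ℝⁿ by T(x)_m = min(u⁺_m, max(u⁻_m, x_m)), and the energy E(η) = ½ηᵀAη − Σ_{m=1}^n ∫₀^{η_m} g_m(s) ds − bᵀη. Then E(T(x)) ≤ E(x) for every x ∈ ℝⁿ. -/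

import Mathlib

open scoped BigOperators
open Matrix

/-- The discrete energy `E(η) = ½ ηᵀAη − ∑ m, ∫₀^{η_m} g_m(s) ds − bᵀη`. -/
noncomputable def discreteEnergy (n : ℕ) (A : Matrix (Fin n) (Fin n) ℝ)
    (b : Fin n → ℝ) (g : Fin n → ℝ → ℝ) (η : Fin n → ℝ) : ℝ :=
  (1 / 2) * (η ⬝ᵥ A.mulVec η) - (∑ m, ∫ s in (0 : ℝ)..(η m), g m s) - b ⬝ᵥ η

/-- Lemma 3.5 part 1, truncation decreases the energy: with `A`
symmetric positive definite, nonpositive off-diagonal entries, `c⁻_m ≤ g_m ≤ c⁺_m`,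
`A u⁺ = c⁺ + b`, `A u⁻ = c⁻ + b`, `u⁻ ⪯ u⁺`, the truncation
`T(x)_m = min(u⁺_m, max(u⁻_m, x_m))` satisfies `E(T(x)) ≤ E(x)` for all `x`. -/
theorem truncation_decreases_energy
    (n : ℕ) (hn : 1 ≤ n) (A : Matrix (Fin n) (Fin n) ℝ) (hA : A.PosDef)
    (hoff : ∀ m j, m ≠ j → A m j ≤ 0)
    (b : Fin n → ℝ) (g : Fin n → ℝ → ℝ) (cminus cplus : Fin n → ℝ)
    (hcont : ∀ m, Continuous (g m))
    (hbounds : ∀ m (s : ℝ), cminus m ≤ g m s ∧ g m s ≤ cplus m)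
    (hc : ∀ m, cminus m ≤ cplus m)
    (uminus uplus : Fin n → ℝ) (hle : ∀ m, uminus m ≤ uplus m)
    (hup : A.mulVec uplus = cplus + b)
    (hum : A.mulVec uminus = cminus + b) :
    ∀ x : Fin n → ℝ,
      discreteEnergy n A b g (fun m => min (uplus m) (max (uminus m) (x m))) ≤
        discreteEnergy n A b g x := by
  intro x
  set y : Fin n → ℝ := fun m => min (uplus m) (max (uminus m) (x m)) with hy
  set d : Fin n → ℝ := fun m => x m - y m with hd
  have hyle : ∀ m, y m ≤ uplus m := fun m => min_le_left _ _
  have hyge : ∀ m, uminus m ≤ y m := fun m => le_min (hle m) (le_max_left _ _)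
  have hAt : Aᵀ = A := by
    have := hA.isHermitian
    simpa [Matrix.IsHermitian, Matrix.conjTranspose_eq_transpose_of_trivial] using this
  have hsym : ∀ v w : Fin n → ℝ, v ⬝ᵥ A.mulVec w = w ⬝ᵥ A.mulVec v := by
    intro v w
    rw [Matrix.dotProduct_mulVec, ← Matrix.mulVec_transpose, hAt, dotProduct_comm]
  have hint : ∀ m (a c : ℝ), IntervalIntegrable (g m) MeasureTheory.volume a c :=
    fun m a c => (hcont m).intervalIntegrable a c
  have hxyd : x = y + d := by funext m; simp [hd]
  -- quadratic expansion
  have hquad : x ⬝ᵥ A.mulVec x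
      = y ⬝ᵥ A.mulVec y + 2 * (d ⬝ᵥ A.mulVec y) + d ⬝ᵥ A.mulVec d := by
    rw [hxyd, Matrix.mulVec_add, add_dotProduct, dotProduct_add,
      dotProduct_add, hsym y d]
    ring
  have hbx : b ⬝ᵥ x = b ⬝ᵥ y + b ⬝ᵥ d := by
    rw [hxyd, dotProduct_add]
  have hintsum : (∑ m, ∫ s in (0:ℝ)..(x m), g m s)
      = (∑ m, ∫ s in (0:ℝ)..(y m), g m s) + ∑ m, ∫ s in (y m)..(x m), g m s := by
    rw [← Finset.sum_add_distrib]
    refine Finset.sum_congr rfl fun m _ => ?_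
    rw [intervalIntegral.integral_add_adjacent_intervals (hint m 0 (y m)) (hint m (y m) (x m))]
  -- each summand nonneg
  have key : ∀ m, 0 ≤ d m * (A.mulVec y) m - (∫ s in (y m)..(x m), g m s) - b m * d m := by
    intro m
    rcases lt_or_ge (uplus m) (x m) with h1 | h1
    · -- x m > uplus m, y m = uplus m
      have hym : y m = uplus m := by
        have h2 : max (uminus m) (x m) = x m := max_eq_right ((hle m).trans h1.le)
        simp only [hy]
        rw [h2, min_eq_left h1.le]
      have hdm : 0 ≤ d m := by simp only [hd, hym]; linarith
      have hAy : cplus m + b m ≤ (A.mulVec y) m := by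
        have hup' : (A.mulVec uplus) m = cplus m + b m := by rw [hup]; rfl
        rw [← hup']
        simp only [Matrix.mulVec, dotProduct]
        refine Finset.sum_le_sum fun j _ => ?_
        by_cases hj : j = m
        · subst hj; rw [hym]
        · exact mul_le_mul_of_nonpos_left (hyle j) (hoff m j (Ne.symm hj))
      have hI : (∫ s in (y m)..(x m), g m s) ≤ cplus m * d m := by
        have hle' : y m ≤ x m := by simp only [hd] at hdm; linarith
        have := intervalIntegral.integral_mono_on hle' (hint m (y m) (x m))
          (intervalIntegrable_const (c := cplus m)) (fun s _ => (hbounds m s).2)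
        simpa [hd, mul_comm, smul_eq_mul] using this
      nlinarith [mul_le_mul_of_nonneg_left hAy hdm]
    · rcases lt_or_ge (x m) (uminus m) with h2 | h2
      · -- x m < uminus m, y m = uminus m
        have hym : y m = uminus m := by
          have h3 : max (uminus m) (x m) = uminus m := max_eq_left h2.le
          simp only [hy]
          rw [h3, min_eq_right (hle m)]
        have hdm : d m ≤ 0 := by simp only [hd, hym]; linarith
        have hAy : (A.mulVec y) m ≤ cminus m + b m := by
          have hum' : (A.mulVec uminus) m = cminus m + b m := by rw [hum]; rfl
          rw [← hum']
          simp only [Matrix.mulVec, dotProduct]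
          refine Finset.sum_le_sum fun j _ => ?_
          by_cases hj : j = m
          · subst hj; rw [hym]
          · exact mul_le_mul_of_nonpos_left (hyge j) (hoff m j (Ne.symm hj))
        have hle' : x m ≤ y m := by rw [hym]; exact h2.le
        have hI : (∫ s in (y m)..(x m), g m s) ≤ cminus m * d m := by
          have h0 : (y m - x m) * cminus m ≤ ∫ u in (x m)..(y m), g m u := by
            have := intervalIntegral.integral_mono_on hle'
              (intervalIntegrable_const (c := cminus m)) (hint m (x m) (y m))
              (fun s _ => (hbounds m s).1)
            simpa [smul_eq_mul] using this
          have hsymm := intervalIntegral.integral_symm (μ := MeasureTheory.volume) (f := g m) (x m) (y m)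
          have hdm' : d m = x m - y m := rfl
          rw [show (∫ s in (y m)..(x m), g m s) = -∫ u in (x m)..(y m), g m u from hsymm,
            hdm']
          nlinarith
        have hmul : d m * (cminus m + b m) ≤ d m * (A.mulVec y) m :=
          mul_le_mul_of_nonpos_left hAy hdm
        nlinarith
      · -- uminus m ≤ x m ≤ uplus m, y m = x m
        have hym : y m = x m := by
          simp only [hy]
          rw [max_eq_right h2, min_eq_right h1]
        have hdm : d m = 0 := by simp [hd, hym]
        simp [hdm, hym]
  have hq : 0 ≤ d ⬝ᵥ A.mulVec d := by
    rcases eq_or_ne d 0 with h | h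
    · simp [h]
    · have := hA.dotProduct_mulVec_pos h
      simpa using this.le
  have hsumkey : 0 ≤ ∑ m, (d m * (A.mulVec y) m - (∫ s in (y m)..(x m), g m s) - b m * d m) :=
    Finset.sum_nonneg fun m _ => key m
  have hdAy : d ⬝ᵥ A.mulVec y = ∑ m, d m * (A.mulVec y) m := rfl
  have hbd : b ⬝ᵥ d = ∑ m, b m * d m := rfl
  have hsplit : (∑ m, (d m * (A.mulVec y) m - (∫ s in (y m)..(x m), g m s) - b m * d m))
      = (∑ m, d m * (A.mulVec y) m) - (∑ m, ∫ s in (y m)..(x m), g m s)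
        - ∑ m, b m * d m := by
    rw [Finset.sum_sub_distrib, Finset.sum_sub_distrib]
  have hE : discreteEnergy n A b g x - discreteEnergy n A b g y
      = (1/2) * (d ⬝ᵥ A.mulVec d)
        + ∑ m, (d m * (A.mulVec y) m - (∫ s in (y m)..(x m), g m s) - b m * d m) := by
    simp only [discreteEnergy, hquad, hbx, hintsum, hsplit, hdAy, hbd]
    ring
  have : 0 ≤ discreteEnergy n A b g x - discreteEnergy n A b g y := by
    rw [hE]; positivity
  linarith
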